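/- Assume p_min > p_tail and T ≥ 1. (i) Let q > 0 satisfy q ≤ 2πT/3 and p_min·exp(−q²/2) ≥ p_tail + (p_min − p_tail)/2; if θ ∈ ℝ satisfies |θ − λ_m|_{2π} ≤ q/T for some m ∈ D, then for every e ∈ ℂ with |e| ≤ (p_min − p_tail)/8 one has |Σ_{m′=1}^M p_{m′} φ_p(θ − λ_{m′}) + e| ≥ p_tail + 3(p_min − p_tail)/8. (ii) Let α > 0 satisfy α ≤ 2πT and 1.01·exp(−α²/18) ≤ (p_min − p_tail)/8; if θ ∈ ℝ satisfies |θ − λ_m|_{2π} ≥ α/(3T) for every m ∈ D, then for every e ∈ ℂ with |e| ≤ (p_min − p_tail)/8 one has |Σ_{m′=1}^M p_{m′} φ_p(θ − λ_{m′}) + e| ≤ p_tail + (p_min − p_tail)/4. -/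

import Mathlib

set_option maxHeartbeats 1000000


open Real Set

noncomputable section

/-- The (unnormalized) `2π`-periodization of the Gaussian `x ↦ exp(-x²T²/2)`. -/
def periodicGaussSum (T x : ℝ) : ℝ :=
  ∑' j : ℤ, Real.exp (-((x + 2 * π * j) ^ 2 * T ^ 2) / 2)

/-- The normalizing constant `W = (Σ_{j∈ℤ} exp(-2π²j²T²))⁻¹`, so that `φ_p(0) = 1`. -/
def Wconst (T : ℝ) : ℝ := (∑' j : ℤ, Real.exp (-(2 * π ^ 2 * j ^ 2 * T ^ 2)))⁻¹

/-- The periodic Gaussian `φ_p(x) = W·Σ_{j∈ℤ} exp(-(x+2πj)²T²/2)`. -/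
def phip (T x : ℝ) : ℝ := Wconst T * periodicGaussSum T x

/-- The `mod 2π` distance `|u − v|_{2π} = min_{j∈ℤ} |u − v + 2πj|`. -/
def dist2pi (u v : ℝ) : ℝ := ⨅ j : ℤ, |u - v + 2 * π * j|

namespace PF

def term (T x : ℝ) (j : ℤ) : ℝ := Real.exp (-((x + 2 * π * j) ^ 2 * T ^ 2) / 2)

lemma pgs_eq (T x : ℝ) : periodicGaussSum T x = ∑' j : ℤ, term T x j := rfl

lemma term_nonneg (T x : ℝ) (j : ℤ) : 0 ≤ term T x j := (Real.exp_pos _).le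

-- basic decay bound

lemma term_le (T x : ℝ) (hT : 1 ≤ T) (j : ℤ) (n : ℕ) (h : (n : ℝ) ≤ |x + 2 * π * j|) :
    term T x j ≤ Real.exp (-(1:ℝ)/2) ^ n := by
  have h1 : ((n:ℝ))^2 ≤ (x + 2*π*j)^2 := by
    have := sq_abs (x + 2*π*j)
    nlinarith [abs_nonneg (x + 2*π*j), Nat.cast_nonneg (α := ℝ) n]
  have hT2 : (1:ℝ) ≤ T^2 := by nlinarith
  have h2 : ((n:ℝ)) ≤ (x + 2*π*j)^2 * T^2 := by
    have : ((n:ℝ)) ≤ (n:ℝ)^2 := by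
      rcases Nat.eq_zero_or_pos n with h | h
      · simp [h]
      · have : (1:ℝ) ≤ n := by exact_mod_cast h
        nlinarith
    nlinarith [sq_nonneg (x + 2*π*j)]
  calc term T x j ≤ Real.exp (-(n:ℝ)/2) := by
        unfold term
        apply Real.exp_le_exp.2
        linarith
    _ = Real.exp (-(1:ℝ)/2) ^ n := by
        rw [← Real.exp_nat_mul]; ring_nf

lemma summable_term (T : ℝ) (hT : 1 ≤ T) (x : ℝ) : Summable (term T x) := by
  have hgeom : Summable (fun n : ℕ => Real.exp (-(1:ℝ)/2) ^ n) :=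
    summable_geometric_of_lt_one (Real.exp_pos _).le
      (Real.exp_lt_one_iff.2 (by norm_num))
  have hpi : (1:ℝ) ≤ 2 * π := by nlinarith [Real.pi_gt_three]
  apply Summable.of_nat_of_neg
  · rw [← summable_nat_add_iff (⌈|x|⌉₊)]
    apply Summable.of_nonneg_of_le (fun n => term_nonneg _ _ _) (fun n => term_le T x hT _ n ?_)
    · exact hgeom
    · have hN : |x| ≤ (⌈|x|⌉₊ : ℝ) := Nat.le_ceil _
      have : (n:ℝ) ≤ x + 2*π*((n + ⌈|x|⌉₊ : ℕ) : ℤ) := by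
        push_cast
        nlinarith [abs_nonneg x, neg_abs_le x, Nat.cast_nonneg (α := ℝ) n]
      exact this.trans (le_abs_self _)
  · rw [← summable_nat_add_iff (⌈|x|⌉₊ + 1)]
    apply Summable.of_nonneg_of_le (fun n => term_nonneg _ _ _) (fun n => term_le T x hT _ n ?_)
    · exact hgeom
    · have hN : |x| ≤ (⌈|x|⌉₊ : ℝ) := Nat.le_ceil _
      have : (n:ℝ) ≤ -(x + 2*π*(-((n + (⌈|x|⌉₊ + 1) : ℕ)) : ℤ)) := by
        push_cast
        nlinarith [le_abs_self x, Nat.cast_nonneg (α := ℝ) n]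
      exact this.trans (neg_le_abs _)

lemma pgs_nonneg (T x : ℝ) : 0 ≤ periodicGaussSum T x :=
  tsum_nonneg (term_nonneg T x)

lemma pgs_shift (T x : ℝ) (k : ℤ) : periodicGaussSum T (x + 2 * π * k) = periodicGaussSum T x := by
  rw [pgs_eq, pgs_eq]
  calc (∑' j : ℤ, term T (x + 2*π*k) j) = ∑' j : ℤ, term T x (Equiv.addRight k j) := by
        congr 1; funext j
        unfold term
        simp only [Equiv.coe_addRight]
        push_cast
        ring_nf
    _ = ∑' j : ℤ, term T x j := (Equiv.addRight k).tsum_eq (term T x)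

lemma pgs_neg (T x : ℝ) : periodicGaussSum T (-x) = periodicGaussSum T x := by
  rw [pgs_eq, pgs_eq]
  calc (∑' j : ℤ, term T (-x) j) = ∑' j : ℤ, term T x (Equiv.neg ℤ j) := by
        congr 1; funext j
        unfold term
        simp only [Equiv.neg_apply]
        push_cast
        ring_nf
    _ = ∑' j : ℤ, term T x j := (Equiv.neg ℤ).tsum_eq (term T x)

lemma wsum_eq (T : ℝ) : (∑' j : ℤ, Real.exp (-(2 * π ^ 2 * j ^ 2 * T ^ 2))) = periodicGaussSum T 0 := by
  rw [pgs_eq]; congr 1; funext j; unfold term; congr 1; ring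

lemma one_le_pgs_zero (T : ℝ) (hT : 1 ≤ T) : 1 ≤ periodicGaussSum T 0 := by
  rw [pgs_eq]
  have h0 : term T 0 0 = 1 := by unfold term; norm_num
  calc (1:ℝ) = term T 0 0 := h0.symm
    _ ≤ ∑' j : ℤ, term T 0 j := Summable.le_tsum (summable_term T hT 0) 0 (fun j _ => term_nonneg T 0 j)

lemma Wconst_pos (T : ℝ) (hT : 1 ≤ T) : 0 < Wconst T := by
  unfold Wconst
  rw [wsum_eq]
  exact inv_pos.2 (lt_of_lt_of_le one_pos (one_le_pgs_zero T hT))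

lemma Wconst_le_one (T : ℝ) (hT : 1 ≤ T) : Wconst T ≤ 1 := by
  unfold Wconst
  rw [wsum_eq]
  exact inv_le_one_of_one_le₀ (one_le_pgs_zero T hT)

lemma Wconst_mul_pgs_zero (T : ℝ) (hT : 1 ≤ T) : Wconst T * periodicGaussSum T 0 = 1 := by
  unfold Wconst
  rw [wsum_eq]
  exact inv_mul_cancel₀ (by linarith [one_le_pgs_zero T hT])

lemma pgs_lower (T : ℝ) (hT : 1 ≤ T) (x : ℝ) :
    Real.exp (-(x ^ 2 * T ^ 2) / 2) * periodicGaussSum T 0 ≤ periodicGaussSum T x := by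
  set E : ℝ := Real.exp (-(x ^ 2 * T ^ 2) / 2) with hE
  have hsx : Summable (term T x) := summable_term T hT x
  have hsxn : Summable (fun j : ℤ => term T x (-j)) :=
    ((Equiv.neg ℤ).summable_iff (f := term T x)).2 hsx
  have hs0 : Summable (fun j : ℤ => E * term T 0 j) := (summable_term T hT 0).mul_left E
  have key : ∀ j : ℤ, 2 * (E * term T 0 j) ≤ term T x j + term T x (-j) := by
    intro j
    set B : ℝ := 2 * π * j * x * T ^ 2 with hB
    have e1 : term T x j = E * term T 0 j * Real.exp (-B) := by
      unfold term
      rw [hE, ← Real.exp_add, ← Real.exp_add]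
      congr 1; push_cast; ring
    have e2 : term T x (-j) = E * term T 0 j * Real.exp B := by
      unfold term
      rw [hE, ← Real.exp_add, ← Real.exp_add]
      congr 1; push_cast; ring
    have h2 : 2 ≤ Real.exp (-B) + Real.exp B := by
      have hb := two_mul_le_add_sq (Real.exp (-B/2)) (Real.exp (B/2))
      have h3 : Real.exp (-B/2) * Real.exp (B/2) = 1 := by
        rw [← Real.exp_add]; ring_nf; exact Real.exp_zero
      have h4 : Real.exp (-B/2) ^ 2 = Real.exp (-B) := by
        rw [← Real.exp_nat_mul]; congr 1; push_cast; ring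
      have h5 : Real.exp (B/2) ^ 2 = Real.exp B := by
        rw [← Real.exp_nat_mul]; congr 1; push_cast; ring
      rw [h4, h5] at hb
      nlinarith
    have hpos : 0 ≤ E * term T 0 j := mul_nonneg (Real.exp_pos _).le (term_nonneg T 0 j)
    nlinarith [Real.exp_pos B, Real.exp_pos (-B)]
  have hsum_neg : (∑' j : ℤ, term T x (-j)) = ∑' j : ℤ, term T x j :=
    (Equiv.neg ℤ).tsum_eq (term T x)
  have h3 : (∑' j : ℤ, 2 * (E * term T 0 j)) ≤ ∑' j : ℤ, (term T x j + term T x (-j)) :=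
    Summable.tsum_le_tsum key (hs0.mul_left 2) (hsx.add hsxn)
  rw [Summable.tsum_add hsx hsxn, hsum_neg, tsum_mul_left, tsum_mul_left] at h3
  rw [pgs_eq, pgs_eq]
  linarith

lemma two_pi_pos : (0:ℝ) < 2 * π := by positivity

/-- representative of u-v in (-π, π] realizing dist2pi -/

lemma dist2pi_rep (u v : ℝ) :
    ∃ r : ℝ, |r| ≤ π ∧ (∃ k : ℤ, u - v = r + 2 * π * k) ∧ dist2pi u v = |r| := by
  set b := u - v with hb
  set r := toIocMod two_pi_pos (-π) b with hr
  have hmem := toIocMod_mem_Ioc two_pi_pos (-π) b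
  rw [Set.mem_Ioc] at hmem
  have hpi : -π < r ∧ r ≤ π := by
    constructor
    · exact hmem.1
    · have := hmem.2; linarith
  have habs : |r| ≤ π := abs_le.2 ⟨hpi.1.le, hpi.2⟩
  have hksub := self_sub_toIocMod two_pi_pos (-π) b
  set k : ℤ := toIocDiv two_pi_pos (-π) b with hk
  have hbk : b = r + 2 * π * k := by
    have : b - r = k • (2 * π) := hksub
    rw [zsmul_eq_mul] at this
    linarith [this]
  refine ⟨r, habs, ⟨k, hbk⟩, ?_⟩
  have hbdd : BddBelow (Set.range fun j : ℤ => |b + 2 * π * j|) := by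
    refine ⟨0, ?_⟩
    rintro y ⟨j, rfl⟩
    exact abs_nonneg _
  apply le_antisymm
  · have h0 : dist2pi u v ≤ |b + 2 * π * ((-k : ℤ) : ℝ)| := ciInf_le hbdd (-k)
    have : |b + 2 * π * ((-k : ℤ) : ℝ)| = |r| := by
      congr 1; rw [hbk]; push_cast; ring
    linarith
  · apply le_ciInf
    intro j
    have heq : b + 2 * π * j = r + 2 * π * (k + j) := by rw [hbk]; push_cast; ring
    rw [heq]
    have hm : ((k:ℝ) + (j:ℝ)) = ((k + j : ℤ) : ℝ) := by push_cast; ring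
    rw [hm]
    rcases eq_or_ne (k + j) 0 with h | h
    · rw [h]; simp
    · have h1 : (1:ℝ) ≤ |((k + j : ℤ) : ℝ)| := by
        rw [← Int.cast_abs]
        exact_mod_cast Int.one_le_abs (by exact_mod_cast h)
      have h2 : 2 * π ≤ |2 * π * ((k + j : ℤ) : ℝ)| := by
        rw [abs_mul, abs_of_pos two_pi_pos]
        nlinarith [two_pi_pos]
      have h3 : |2 * π * ((k + j : ℤ) : ℝ)| - |r| ≤ |r + 2 * π * ((k + j : ℤ) : ℝ)| := by
        have e : |2 * π * ((k + j : ℤ) : ℝ)| = |(r + 2 * π * ((k + j : ℤ) : ℝ)) + (-r)| := by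
          congr 1; ring
        have h6 := abs_add_le (r + 2 * π * ((k + j : ℤ) : ℝ)) (-r)
        rw [abs_neg] at h6
        rw [e]
        linarith
      linarith [habs, Real.pi_pos]

lemma exp_bound_aux (T y : ℝ) (hT : 1 ≤ T) (n : ℕ) (hy : ((n:ℝ) + 2) * π ≤ |y|) :
    Real.exp (-(y ^ 2 * T ^ 2) / 2) ≤
      Real.exp (-(2 * π ^ 2 / 9) * T ^ 2) * Real.exp (-(12:ℝ)) * Real.exp (-(6:ℝ)) ^ n := by
  have hpi1 : 3.1415 < π := by linarith [Real.pi_gt_d6]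
  have hpi2 : π < 3.1416 := by linarith [Real.pi_lt_d2, Real.pi_lt_d6]
  have hT2 : (1:ℝ) ≤ T ^ 2 := by nlinarith
  have hn : (0:ℝ) ≤ n := Nat.cast_nonneg n
  have hy2 : (((n:ℝ) + 2) * π) ^ 2 ≤ y ^ 2 := by
    have h0 : (0:ℝ) ≤ ((n:ℝ) + 2) * π := by positivity
    nlinarith [sq_abs y, abs_nonneg y]
  have hpilow : (9.86:ℝ) ≤ π ^ 2 := by nlinarith
  have hpihigh : π ^ 2 ≤ 9.87 := by nlinarith
  have hkey : 2 * π ^ 2 / 9 + (12 + 6 * (n:ℝ)) ≤ (((n:ℝ) + 2) * π) ^ 2 / 2 := by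
    have hmul : ((n:ℝ) + 2) ^ 2 * 9.86 ≤ ((n:ℝ) + 2) ^ 2 * π ^ 2 :=
      mul_le_mul_of_nonneg_left hpilow (sq_nonneg _)
    have hexpand : (((n:ℝ) + 2) * π) ^ 2 = ((n:ℝ) + 2) ^ 2 * π ^ 2 := by ring
    nlinarith [sq_nonneg ((n:ℝ))]
  have hexp : -(y ^ 2 * T ^ 2) / 2 ≤ -(2 * π ^ 2 / 9) * T ^ 2 + (-(12:ℝ)) + (-(6:ℝ)) * n := by
    have h1 : (2 * π ^ 2 / 9) * T ^ 2 + (12 + 6 * (n:ℝ)) * 1 ≤ (((n:ℝ) + 2) * π) ^ 2 / 2 * T ^ 2 := by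
      nlinarith [sq_nonneg ((n:ℝ) + 2), Real.pi_pos]
    nlinarith
  calc Real.exp (-(y ^ 2 * T ^ 2) / 2)
      ≤ Real.exp (-(2 * π ^ 2 / 9) * T ^ 2 + (-(12:ℝ)) + (-(6:ℝ)) * n) := Real.exp_le_exp.2 hexp
    _ = Real.exp (-(2 * π ^ 2 / 9) * T ^ 2) * Real.exp (-(12:ℝ)) * Real.exp (-(6:ℝ)) ^ n := by
        rw [Real.exp_add, Real.exp_add]
        congr 1
        rw [mul_comm (-(6:ℝ)) (n:ℝ), Real.exp_nat_mul]

lemma pgs_split (T x : ℝ) (hT : 1 ≤ T) (hx0 : 0 ≤ x) (hxpi : x ≤ π) :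
    periodicGaussSum T x ≤ Real.exp (-(x ^ 2 * T ^ 2) / 2)
      + Real.exp (-((2 * π - x) ^ 2 * T ^ 2) / 2)
      + (1/400) * Real.exp (-(2 * π ^ 2 / 9) * T ^ 2) := by
  set f := term T x with hf
  have hs : Summable f := summable_term T hT x
  have hsp : Summable (fun n : ℕ => f n) := hs.comp_injective Nat.cast_injective
  have hsm : Summable (fun n : ℕ => f (-(n + 1))) := by
    apply hs.comp_injective
    intro a b hab
    simpa using hab
  have hsp1 : Summable (fun n : ℕ => f ((n:ℕ) + 1)) :=
    hsp.comp_injective (add_left_injective 1)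
  have hsm1 : Summable (fun n : ℕ => f (-(((n+1:ℕ):ℤ) + 1))) :=
    hsm.comp_injective (add_left_injective 1)
  set E' : ℝ := Real.exp (-(2 * π ^ 2 / 9) * T ^ 2) with hE'
  set e12 : ℝ := Real.exp (-(12:ℝ)) with he12
  set e6 : ℝ := Real.exp (-(6:ℝ)) with he6
  have he6lt : e6 < 1 := Real.exp_lt_one_iff.2 (by norm_num)
  have he6pos : 0 < e6 := Real.exp_pos _
  have hgeo : Summable (fun n : ℕ => E' * e12 * e6 ^ n) :=
    (summable_geometric_of_lt_one he6pos.le he6lt).mul_left _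
  have hpin : (0:ℝ) ≤ π := Real.pi_pos.le
  -- tail bounds
  have tb1 : ∀ n : ℕ, f ((n:ℕ) + 1) ≤ E' * e12 * e6 ^ n := by
    intro n
    have hy : ((n:ℝ) + 2) * π ≤ |x + 2 * π * (((n+1:ℕ):ℤ) : ℝ)| := by
      have h1 : ((n:ℝ) + 2) * π ≤ x + 2 * π * (((n+1:ℕ):ℤ) : ℝ) := by
        push_cast
        nlinarith
      exact h1.trans (le_abs_self _)
    have := exp_bound_aux T (x + 2 * π * (((n+1:ℕ):ℤ) : ℝ)) hT n hy
    calc f ((n:ℕ) + 1) = Real.exp (-((x + 2 * π * (((n+1:ℕ):ℤ) : ℝ)) ^ 2 * T ^ 2) / 2) := by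
          rw [hf]; unfold term; norm_num
      _ ≤ E' * e12 * e6 ^ n := this
  have tb2 : ∀ n : ℕ, f (-(((n+1:ℕ):ℤ) + 1)) ≤ E' * e12 * e6 ^ n := by
    intro n
    have hy : ((n:ℝ) + 2) * π ≤ |x + 2 * π * ((-(((n+1:ℕ):ℤ) + 1) : ℤ) : ℝ)| := by
      have h1 : ((n:ℝ) + 2) * π ≤ -(x + 2 * π * ((-(((n+1:ℕ):ℤ) + 1) : ℤ) : ℝ)) := by
        push_cast
        nlinarith
      exact h1.trans (neg_le_abs _)
    have := exp_bound_aux T (x + 2 * π * ((-(((n+1:ℕ):ℤ) + 1) : ℤ) : ℝ)) hT n hy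
    calc f (-(((n+1:ℕ):ℤ) + 1)) = Real.exp (-((x + 2 * π * ((-(((n+1:ℕ):ℤ) + 1) : ℤ) : ℝ)) ^ 2 * T ^ 2) / 2) := by
          rw [hf]; unfold term; norm_num
      _ ≤ E' * e12 * e6 ^ n := this
  -- geometric sum bound
  have hgeosum : (∑' n : ℕ, E' * e12 * e6 ^ n) ≤ (1/800) * E' := by
    rw [tsum_mul_left, tsum_geometric_of_lt_one he6pos.le he6lt]
    have hE'pos : 0 < E' := Real.exp_pos _
    have he1 : (2.7182818283:ℝ) < Real.exp 1 := Real.exp_one_gt_d9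
    have hexp12 : (1600:ℝ) ≤ Real.exp 12 := by
      have h12 : Real.exp (12:ℝ) = Real.exp 1 ^ (12:ℕ) := by
        rw [← Real.exp_nat_mul]; norm_num
      have : (2.7:ℝ) ^ (12:ℕ) ≤ Real.exp 1 ^ (12:ℕ) :=
        pow_le_pow_left₀ (by norm_num) (by linarith) _
      have h27 : (1600:ℝ) ≤ (2.7:ℝ) ^ (12:ℕ) := by norm_num
      rw [h12]; linarith
    have he12small : e12 ≤ 1/1600 := by
      rw [he12, Real.exp_neg]
      rw [inv_le_comm₀ (Real.exp_pos _) (by norm_num)]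
      linarith
    have hexp6 : (2:ℝ) ≤ Real.exp 6 := by
      nlinarith [Real.add_one_le_exp (6:ℝ)]
    have he6small : e6 ≤ 1/2 := by
      rw [he6, Real.exp_neg]
      rw [inv_le_comm₀ (Real.exp_pos _) (by norm_num)]
      linarith
    have hinv : (1 - e6)⁻¹ ≤ 2 := by
      rw [inv_le_comm₀ (by linarith) (by norm_num)]
      linarith
    have h0 : 0 ≤ (1 - e6)⁻¹ := by
      apply inv_nonneg.2; linarith
    calc E' * e12 * (1 - e6)⁻¹ ≤ E' * (1/1600) * 2 := by
          apply mul_le_mul _ hinv h0 (by positivity)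
          exact mul_le_mul_of_nonneg_left he12small hE'pos.le
      _ = (1/800) * E' := by ring
  -- tail sums
  have tsum1 : (∑' n : ℕ, f ((n:ℕ) + 1)) ≤ (1/800) * E' :=
    le_trans (Summable.tsum_le_tsum tb1 hsp1 hgeo) hgeosum
  have tsum2 : (∑' n : ℕ, f (-(((n+1:ℕ):ℤ) + 1))) ≤ (1/800) * E' :=
    le_trans (Summable.tsum_le_tsum tb2 hsm1 hgeo) hgeosum
  -- split the integer sum
  have split1 : (∑' j : ℤ, f j) = (∑' n : ℕ, f n) + ∑' n : ℕ, f (-(n + 1)) :=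
    tsum_of_nat_of_neg_add_one hsp hsm
  have splitA : (∑' n : ℕ, f ((n:ℕ):ℤ)) = f ((0:ℕ):ℤ) + ∑' n : ℕ, f (((n+1:ℕ):ℤ)) :=
    Summable.tsum_eq_zero_add hsp
  have splitB : (∑' n : ℕ, f (-((n:ℕ) + 1))) = f (-((0:ℕ) + 1)) + ∑' n : ℕ, f (-(((n+1:ℕ):ℤ) + 1)) :=
    Summable.tsum_eq_zero_add hsm
  have hf0 : f ((0:ℕ):ℤ) = Real.exp (-(x ^ 2 * T ^ 2) / 2) := by
    rw [hf]; unfold term; norm_num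
  have hfm1 : f (-((0:ℕ) + 1)) = Real.exp (-((2 * π - x) ^ 2 * T ^ 2) / 2) := by
    rw [hf]; unfold term; norm_num
    congr 1
    ring_nf
    simp
  have hEq : (∑' n : ℕ, f ((n:ℕ) + 1)) = ∑' n : ℕ, f (((n+1:ℕ):ℤ)) := by
    congr 1
  rw [pgs_eq, split1, splitA, splitB, hf0, hfm1]
  rw [← hEq] at *
  linarith [tsum1, tsum2, Real.exp_pos (-(2 * π ^ 2 / 9) * T ^ 2)]

lemma phip_nonneg (T x : ℝ) (hT : 1 ≤ T) : 0 ≤ phip T x :=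
  mul_nonneg (Wconst_pos T hT).le (pgs_nonneg T x)

/-- reduce to the absolute-value representative -/

lemma pgs_rep (T u v : ℝ) :
    ∃ r : ℝ, 0 ≤ r ∧ r ≤ π ∧ dist2pi u v = r ∧
      periodicGaussSum T (u - v) = periodicGaussSum T r := by
  obtain ⟨r0, hr0, ⟨k, hk⟩, hd⟩ := dist2pi_rep u v
  have hshift : periodicGaussSum T (u - v) = periodicGaussSum T r0 := by
    rw [hk]; exact pgs_shift T r0 k
  rcases le_or_gt 0 r0 with h | h
  · exact ⟨r0, h, by rwa [abs_of_nonneg h] at hr0, by rwa [abs_of_nonneg h] at hd, hshift⟩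
  · refine ⟨-r0, by linarith, by rwa [abs_of_neg h] at hr0, by rwa [abs_of_neg h] at hd, ?_⟩
    rw [hshift, ← pgs_neg T (-r0)]
    norm_num

lemma phip_ge (T u v : ℝ) (hT : 1 ≤ T) :
    Real.exp (-((dist2pi u v) ^ 2 * T ^ 2) / 2) ≤ phip T (u - v) := by
  obtain ⟨r, hr0, hrpi, hd, heq⟩ := pgs_rep T u v
  rw [hd]
  unfold phip
  rw [heq]
  have h1 := pgs_lower T hT r
  have hW := Wconst_pos T hT
  have := mul_le_mul_of_nonneg_left h1 hW.le
  calc Real.exp (-(r ^ 2 * T ^ 2) / 2)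
      = Wconst T * (Real.exp (-(r ^ 2 * T ^ 2) / 2) * periodicGaussSum T 0) := by
        rw [show Wconst T * (Real.exp (-(r ^ 2 * T ^ 2) / 2) * periodicGaussSum T 0)
            = Real.exp (-(r ^ 2 * T ^ 2) / 2) * (Wconst T * periodicGaussSum T 0) by ring,
          Wconst_mul_pgs_zero T hT, mul_one]
    _ ≤ Wconst T * periodicGaussSum T r := this

/-- global upper bound -/

lemma phip_le_one_add (T u v : ℝ) (hT : 1 ≤ T) :
    phip T (u - v) ≤ 1 + (1/6) * Real.exp (-(2 * π ^ 2 / 9) * T ^ 2) := by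
  obtain ⟨r, hr0, hrpi, hd, heq⟩ := pgs_rep T u v
  unfold phip
  rw [heq]
  have hsplit := pgs_split T r hT hr0 hrpi
  have hW1 := Wconst_le_one T hT
  have hW0 := Wconst_pos T hT
  set E' : ℝ := Real.exp (-(2 * π ^ 2 / 9) * T ^ 2) with hE'
  have hE'pos : 0 < E' := Real.exp_pos _
  have h1 : Real.exp (-(r ^ 2 * T ^ 2) / 2) ≤ 1 := by
    rw [← Real.exp_zero]
    apply Real.exp_le_exp.2
    have : 0 ≤ r ^ 2 * T ^ 2 := by positivity
    linarith
  have h2 : Real.exp (-((2 * π - r) ^ 2 * T ^ 2) / 2) ≤ (1/7) * E' := by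
    have hpi1 : 3.1415 < π := by linarith [Real.pi_gt_d6]
    have hT2 : (1:ℝ) ≤ T ^ 2 := by nlinarith
    have hexp7 : (7:ℝ) ≤ Real.exp 2 := by
      have h2e : Real.exp (2:ℝ) = Real.exp 1 * Real.exp 1 := by
        rw [← Real.exp_add]; norm_num
      nlinarith [Real.exp_one_gt_d9, Real.exp_pos 1]
    have key : -((2 * π - r) ^ 2 * T ^ 2) / 2 ≤ -(2 * π ^ 2 / 9) * T ^ 2 + (-2) := by
      have hge : π ≤ 2 * π - r := by linarith
      have hsq : π ^ 2 ≤ (2 * π - r) ^ 2 := by nlinarith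
      have hA : π ^ 2 * T ^ 2 ≤ (2 * π - r) ^ 2 * T ^ 2 :=
        mul_le_mul_of_nonneg_right hsq (by positivity)
      have hB : (2:ℝ) ≤ 5 * (π ^ 2 * T ^ 2) / 18 := by
        have hp2 : (9.86:ℝ) ≤ π ^ 2 := by nlinarith
        have hmul : (9.86:ℝ) * 1 ≤ π ^ 2 * T ^ 2 :=
          mul_le_mul hp2 hT2 (by norm_num) (by positivity)
        linarith
      linarith
    calc Real.exp (-((2 * π - r) ^ 2 * T ^ 2) / 2)
        ≤ Real.exp (-(2 * π ^ 2 / 9) * T ^ 2 + (-2)) := Real.exp_le_exp.2 key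
      _ = E' * Real.exp (-2) := by rw [Real.exp_add]
      _ ≤ (1/7) * E' := by
          have : Real.exp (-2:ℝ) ≤ 1/7 := by
            rw [Real.exp_neg, inv_le_comm₀ (Real.exp_pos _) (by norm_num)]
            linarith
          nlinarith
  calc Wconst T * periodicGaussSum T r ≤ periodicGaussSum T r := by
        nlinarith [pgs_nonneg T r]
    _ ≤ 1 + (1/7) * E' + (1/400) * E' := by linarith
    _ ≤ 1 + (1/6) * E' := by nlinarith

lemma phip_far (T u v c : ℝ) (hT : 1 ≤ T) (hc0 : 0 < c) (hc : c ≤ 2 * π / 3)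
    (hd : c ≤ dist2pi u v) :
    phip T (u - v) ≤ 1.01 * Real.exp (-(c ^ 2 * T ^ 2) / 2) := by
  obtain ⟨r, hr0, hrpi, hdr, heq⟩ := pgs_rep T u v
  have hcr : c ≤ r := by rw [hdr] at hd; exact hd
  unfold phip
  rw [heq]
  set E : ℝ := Real.exp (-(c ^ 2 * T ^ 2) / 2) with hE
  have hEpos : 0 < E := Real.exp_pos _
  have hT2 : (1:ℝ) ≤ T ^ 2 := by nlinarith
  have hpi1 : 3.1415 < π := by linarith [Real.pi_gt_d6]
  have hpi2 : π < 3.1416 := by linarith [Real.pi_lt_d6]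
  have hc2 : c ^ 2 ≤ 4.3867 := by nlinarith
  have step : ∀ a b : ℝ, 0 ≤ b → c ^ 2 + 2 * b ≤ a →
      Real.exp (-(a * T ^ 2) / 2) ≤ E * Real.exp (-b) := by
    intro a b hb hab
    rw [hE, ← Real.exp_add]
    apply Real.exp_le_exp.2
    have h1 : (a - c ^ 2) * 1 ≤ (a - c ^ 2) * T ^ 2 :=
      mul_le_mul_of_nonneg_left hT2 (by linarith)
    nlinarith
  have hsplit := pgs_split T r hT hr0 hrpi
  have hrest : Real.exp (-(2 * π ^ 2 / 9) * T ^ 2) ≤ E := by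
    have : Real.exp (-(2 * π ^ 2 / 9) * T ^ 2) = Real.exp (-((4 * π ^ 2 / 9) * T ^ 2) / 2) := by
      congr 1; ring
    rw [this]
    have h := step (4 * π ^ 2 / 9) 0 le_rfl (by nlinarith)
    simpa using h
  -- numeric exponential bounds
  have he6 : Real.exp (-(6:ℝ)) ≤ 1/400 := by
    have h12 : Real.exp (6:ℝ) = Real.exp 1 ^ (6:ℕ) := by
      rw [← Real.exp_nat_mul]; norm_num
    have hp : (2.718:ℝ) ^ (6:ℕ) ≤ Real.exp 1 ^ (6:ℕ) :=
      pow_le_pow_left₀ (by norm_num) (by linarith [Real.exp_one_gt_d9]) _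
    have h400 : (400:ℝ) ≤ (2.718:ℝ) ^ (6:ℕ) := by norm_num
    rw [Real.exp_neg, inv_le_comm₀ (Real.exp_pos _) (by norm_num)]
    rw [h12]; linarith
  have he2 : Real.exp (-(2:ℝ)) ≤ 1/7 := by
    have h2e : Real.exp (2:ℝ) = Real.exp 1 * Real.exp 1 := by
      rw [← Real.exp_add]; norm_num
    have : (7:ℝ) ≤ Real.exp 2 := by
      nlinarith [Real.exp_one_gt_d9, Real.exp_pos 1]
    rw [Real.exp_neg, inv_le_comm₀ (Real.exp_pos _) (by norm_num)]
    linarith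
  have he022 : Real.exp (-(0.22:ℝ)) ≤ 0.82 := by
    have : (1.22:ℝ) ≤ Real.exp 0.22 := by
      nlinarith [Real.add_one_le_exp (0.22:ℝ)]
    rw [Real.exp_neg, inv_le_comm₀ (Real.exp_pos _) (by norm_num)]
    linarith
  have hWle := Wconst_le_one T hT
  have hW0 := Wconst_pos T hT
  have hfinal : periodicGaussSum T r ≤ 1.01 * E := by
    rcases le_or_gt r 2.2 with hr | hr
    · have a1 : Real.exp (-(r ^ 2 * T ^ 2) / 2) ≤ E * Real.exp (-(0:ℝ)) :=
        step (r ^ 2) 0 le_rfl (by nlinarith)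
      have a2 : Real.exp (-((2 * π - r) ^ 2 * T ^ 2) / 2) ≤ E * Real.exp (-(6:ℝ)) := by
        apply step ((2 * π - r) ^ 2) 6 (by norm_num)
        nlinarith [sq_nonneg (2 * π - r - 4.083)]
      rw [neg_zero, Real.exp_zero, mul_one] at a1
      have a2' : E * Real.exp (-(6:ℝ)) ≤ E * (1/400) :=
        mul_le_mul_of_nonneg_left he6 hEpos.le
      linarith
    · have b1 : Real.exp (-(r ^ 2 * T ^ 2) / 2) ≤ E * Real.exp (-(0.22:ℝ)) := by
        apply step (r ^ 2) 0.22 (by norm_num)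
        nlinarith
      have b2 : Real.exp (-((2 * π - r) ^ 2 * T ^ 2) / 2) ≤ E * Real.exp (-(2:ℝ)) := by
        apply step ((2 * π - r) ^ 2) 2 (by norm_num)
        nlinarith
      have h022pos := Real.exp_pos (-(0.22:ℝ))
      have h2pos := Real.exp_pos (-(2:ℝ))
      nlinarith
  calc Wconst T * periodicGaussSum T r ≤ periodicGaussSum T r :=
        mul_le_of_le_one_left (pgs_nonneg T r) hWle
    _ ≤ 1.01 * E := hfinal

lemma dist2pi_nonneg (u v : ℝ) : 0 ≤ dist2pi u v := by
  obtain ⟨r, hr0, _, hd, _⟩ := pgs_rep 1 u v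
  rw [hd]; exact hr0

end PF

open PF in
theorem periodic_filter_two_bounds
    (M : ℕ) (lam p : Fin M → ℝ) (D : Finset (Fin M)) (hD : D.Nonempty)
    (hp : ∀ m, 0 ≤ p m) (hsum : ∑ m, p m = 1)
    (pmin ptail : ℝ) (hpmin : pmin = D.inf' hD p) (hptail : ptail = ∑ m ∈ Dᶜ, p m)
    (hdom : ptail < pmin)
    (T : ℝ) (hT : 1 ≤ T) :
    -- (i) lower bound near a dominant eigenvalue
    (∀ q : ℝ, 0 < q → q ≤ 2 * π * T / 3 →
      ptail + (pmin - ptail) / 2 ≤ pmin * Real.exp (-q ^ 2 / 2) →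
      ∀ θ : ℝ, ∀ m ∈ D, dist2pi θ (lam m) ≤ q / T →
        ∀ e : ℂ, ‖e‖ ≤ (pmin - ptail) / 8 →
          ptail + 3 * (pmin - ptail) / 8 ≤
            ‖(∑ m' : Fin M, (p m' : ℂ) * (phip T (θ - lam m') : ℝ)) + e‖) ∧
    -- (ii) upper bound far from all dominant eigenvalues
    (∀ α : ℝ, 0 < α → α ≤ 2 * π * T →
      1.01 * Real.exp (-α ^ 2 / 18) ≤ (pmin - ptail) / 8 →
      ∀ θ : ℝ, (∀ m ∈ D, α / (3 * T) ≤ dist2pi θ (lam m)) →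
        ∀ e : ℂ, ‖e‖ ≤ (pmin - ptail) / 8 →
          ‖(∑ m' : Fin M, (p m' : ℂ) * (phip T (θ - lam m') : ℝ)) + e‖ ≤
            ptail + (pmin - ptail) / 4) := by
  have hT0 : (0:ℝ) < T := lt_of_lt_of_le one_pos hT
  have hptail0 : 0 ≤ ptail := by
    rw [hptail]; exact Finset.sum_nonneg (fun m _ => hp m)
  have hpartition : ∑ m ∈ D, p m + ∑ m ∈ Dᶜ, p m = 1 := by
    rw [Finset.sum_add_sum_compl]; exact hsum
  have hDsum : ∑ m ∈ D, p m = 1 - ptail := by rw [hptail]; linarith [hpartition]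
  have hDsum0 : 0 ≤ ∑ m ∈ D, p m := Finset.sum_nonneg (fun m _ => hp m)
  have hptail1 : ptail ≤ 1 := by linarith
  constructor
  · -- part (i)
    intro q hq0 _ hqlow θ m hmD hdist e he
    set S : ℝ := ∑ m' : Fin M, p m' * phip T (θ - lam m') with hS
    have hcast : (∑ m' : Fin M, (p m' : ℂ) * ((phip T (θ - lam m') : ℝ) : ℂ)) = (S : ℂ) := by
      rw [hS]; push_cast; ring
    rw [hcast]
    -- pointwise lower bound
    have hd0 : 0 ≤ dist2pi θ (lam m) := dist2pi_nonneg θ (lam m)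
    have hdT : dist2pi θ (lam m) * T ≤ q := by
      rw [div_eq_mul_inv] at hdist
      calc dist2pi θ (lam m) * T ≤ (q * T⁻¹) * T := by
            apply mul_le_mul_of_nonneg_right hdist hT0.le
        _ = q := by field_simp
    have hsq : dist2pi θ (lam m) ^ 2 * T ^ 2 ≤ q ^ 2 := by
      have := mul_le_mul hdT hdT (by positivity) (by positivity)
      nlinarith
    have hphi_m : Real.exp (-q ^ 2 / 2) ≤ phip T (θ - lam m) := by
      refine le_trans ?_ (phip_ge T θ (lam m) hT)
      apply Real.exp_le_exp.2
      linarith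
    have hpmin_le : pmin ≤ p m := by rw [hpmin]; exact Finset.inf'_le p hmD
    have hpmin0 : 0 ≤ pmin := by linarith
    have hterm : pmin * Real.exp (-q ^ 2 / 2) ≤ p m * phip T (θ - lam m) :=
      mul_le_mul hpmin_le hphi_m (Real.exp_pos _).le (le_trans hpmin0 hpmin_le)
    have hsingle : p m * phip T (θ - lam m) ≤ S := by
      rw [hS]
      exact Finset.single_le_sum
        (f := fun m' => p m' * phip T (θ - lam m'))
        (fun i _ => mul_nonneg (hp i) (phip_nonneg T _ hT)) (Finset.mem_univ m)
    have hSlow : ptail + (pmin - ptail) / 2 ≤ S := by linarith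
    -- |S + e| ≥ S - |e|
    have habs : S ≤ ‖(S:ℂ) + e‖ + ‖e‖ := by
      have h1 := norm_add_le ((S:ℂ) + e) (-e)
      simp only [add_neg_cancel_right, norm_neg, Complex.norm_real, Real.norm_eq_abs] at h1
      exact le_trans (le_abs_self S) h1
    linarith
  · -- part (ii)
    intro α hα0 hα2π hαsmall θ hfar e he
    set S : ℝ := ∑ m' : Fin M, p m' * phip T (θ - lam m') with hS
    have hcast : (∑ m' : Fin M, (p m' : ℂ) * ((phip T (θ - lam m') : ℝ) : ℂ)) = (S : ℂ) := by
      rw [hS]; push_cast; ring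
    rw [hcast]
    set K : ℝ := 1.01 * Real.exp (-α ^ 2 / 18) with hK
    set E' : ℝ := Real.exp (-(2 * π ^ 2 / 9) * T ^ 2) with hE'
    have hKpos : 0 < K := by positivity
    have hE'pos : 0 < E' := Real.exp_pos _
    -- each dominant term is small
    have hDsmall : ∀ m ∈ D, phip T (θ - lam m) ≤ K := by
      intro m hm
      have hc0 : 0 < α / (3 * T) := by positivity
      have hc : α / (3 * T) ≤ 2 * π / 3 := by
        rw [div_le_div_iff₀ (by positivity) (by norm_num)]
        nlinarith
      have h := phip_far T θ (lam m) (α / (3 * T)) hT hc0 hc (hfar m hm)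
      have hceq : -((α / (3 * T)) ^ 2 * T ^ 2) / 2 = -α ^ 2 / 18 := by
        field_simp
        ring
      rw [hceq] at h
      exact h
    have hSD : ∑ m ∈ D, p m * phip T (θ - lam m) ≤ (1 - ptail) * K := by
      calc ∑ m ∈ D, p m * phip T (θ - lam m) ≤ ∑ m ∈ D, p m * K :=
            Finset.sum_le_sum (fun m hm =>
              mul_le_mul_of_nonneg_left (hDsmall m hm) (hp m))
        _ = (∑ m ∈ D, p m) * K := by rw [Finset.sum_mul]
        _ = (1 - ptail) * K := by rw [hDsum]
    have hSDc : ∑ m ∈ Dᶜ, p m * phip T (θ - lam m) ≤ ptail * (1 + (1/6) * E') := by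
      calc ∑ m ∈ Dᶜ, p m * phip T (θ - lam m) ≤ ∑ m ∈ Dᶜ, p m * (1 + (1/6) * E') :=
            Finset.sum_le_sum (fun m _ =>
              mul_le_mul_of_nonneg_left (phip_le_one_add T θ (lam m) hT) (hp m))
        _ = (∑ m ∈ Dᶜ, p m) * (1 + (1/6) * E') := by rw [Finset.sum_mul]
        _ = ptail * (1 + (1/6) * E') := by rw [hptail]
    have hSsplit : S = (∑ m ∈ D, p m * phip T (θ - lam m)) + ∑ m ∈ Dᶜ, p m * phip T (θ - lam m) := by
      rw [hS, Finset.sum_add_sum_compl]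
    have hS0 : 0 ≤ S := by
      rw [hS]
      exact Finset.sum_nonneg (fun i _ => mul_nonneg (hp i) (phip_nonneg T _ hT))
    -- |S + e| ≤ S + |e|
    have habs : ‖(S:ℂ) + e‖ ≤ S + ‖e‖ := by
      have h1 := norm_add_le ((S:ℂ)) e
      rw [Complex.norm_real, Real.norm_eq_abs, abs_of_nonneg hS0] at h1
      exact h1
    -- E' ≤ exp(-α²/18)
    have hE'le : E' ≤ Real.exp (-α ^ 2 / 18) := by
      apply Real.exp_le_exp.2
      have h1 : α ^ 2 ≤ (2 * π * T) ^ 2 := by nlinarith [Real.pi_pos]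
      nlinarith
    set s : ℝ := (pmin - ptail) / 8 with hs
    have hKs : K ≤ s := hαsmall
    have hE's : E' ≤ s := by
      have : Real.exp (-α ^ 2 / 18) ≤ K := by
        rw [hK]; nlinarith [Real.exp_pos (-α ^ 2 / 18)]
      linarith
    have hs0 : 0 < s := by rw [hs]; linarith
    have t1 : (1 - ptail) * K ≤ (1 - ptail) * s :=
      mul_le_mul_of_nonneg_left hKs (by linarith)
    have t2 : ptail * E' ≤ ptail * s :=
      mul_le_mul_of_nonneg_left hE's hptail0
    have t3 : 0 ≤ ptail * s := mul_nonneg hptail0 hs0.le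
    calc ‖(S:ℂ) + e‖ ≤ S + ‖e‖ := habs
      _ ≤ (1 - ptail) * K + ptail * (1 + (1/6) * E') + s := by
          rw [hSsplit]; linarith
      _ ≤ ptail + (pmin - ptail) / 4 := by nlinarith

end
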